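/- arXiv:2206.11673 — 2 statements merged into one kernel-verified Lean document; each statement's English description precedes it below -/
import Mathlib

section
/- Suppose h : X → {0,1} is confident on Y over W in the sense that for each w with P[Y = g*(w) | W = w] > 1/2 we have P[h(X) = g*(w) | W = w] ≥ P[Y = g*(w) | W = w]. Then Cov(h(X), Y | W) ≤ Var(h(X) | W) ≤ Var(Y | W) almost surely. -/
open MeasureTheory ProbabilityTheory

private lemma bin_indicator {Ω : Type*} (f : Ω → ℝ) (hbin : ∀ ω, f ω = 0 ∨ f ω = 1) :
    f = Set.indicator {ω | f ω = 1} (fun _ => (1 : ℝ)) := by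
  funext ω
  rcases hbin ω with h0 | h1
  · rw [Set.indicator_of_notMem, h0]
    simp [Set.mem_setOf_eq, h0]
  · rw [Set.indicator_of_mem, h1]
    exact h1

private lemma bin_facts {Ω : Type*} [MeasurableSpace Ω] (ν : Measure Ω)
    [IsProbabilityMeasure ν] (f : Ω → ℝ) (hf : Measurable f)
    (hbin : ∀ ω, f ω = 0 ∨ f ω = 1) :
    Integrable f ν ∧ ∫ ω, f ω ∂ν = (ν {ω | f ω = 1}).toReal := by
  have hs : MeasurableSet {ω | f ω = 1} := hf (measurableSet_singleton 1)
  have hi := bin_indicator f hbin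
  constructor
  · rw [hi]
    exact (integrable_indicator_iff hs).2 (integrableOn_const (measure_ne_top ν _) (by simp))
  · conv_lhs => rw [hi]
    rw [integral_indicator_const (1 : ℝ) hs]
    simp
    rfl

private lemma bin_memLp2 {Ω : Type*} [MeasurableSpace Ω] (ν : Measure Ω)
    [IsProbabilityMeasure ν] (f : Ω → ℝ) (hf : Measurable f)
    (hbin : ∀ ω, f ω = 0 ∨ f ω = 1) : MemLp f 2 ν := by
  refine MemLp.of_bound hf.aestronglyMeasurable 1 (ae_of_all _ fun ω => ?_)
  rcases hbin ω with h | h <;> simp [h]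

private lemma bin_variance {Ω : Type*} [MeasurableSpace Ω] (ν : Measure Ω)
    [IsProbabilityMeasure ν] (f : Ω → ℝ) (hf : Measurable f)
    (hbin : ∀ ω, f ω = 0 ∨ f ω = 1) :
    variance f ν = (ν {ω | f ω = 1}).toReal - (ν {ω | f ω = 1}).toReal ^ 2 := by
  have h2 : (fun ω => f ω ^ 2) = f := by
    funext ω; rcases hbin ω with h | h <;> simp [h]
  rw [variance_eq_sub (bin_memLp2 ν f hf hbin),
    show (f ^ 2 : Ω → ℝ) = f from by funext ω; rcases hbin ω with h | h <;> simp [h],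
    (bin_facts ν f hf hbin).2]

/-- If a binary classifier `h` is confident on `Y` over `W`
(`P[h(X) = g*(w) | W = w] ≥ P[Y = g*(w) | W = w] > 1/2` for each `w`), then conditionally
on every context `w`, `Cov(h(X), Y | W) ≤ Var(h(X) | W) ≤ Var(Y | W)`. -/
theorem stmt8 {Ω 𝓧 𝓦 : Type*} [MeasurableSpace Ω] [Countable 𝓦]
    (μ : Measure Ω) [IsProbabilityMeasure μ]
    (X : Ω → 𝓧) (W : Ω → 𝓦) (Y : Ω → ℝ) (h : 𝓧 → ℝ)
    (hYbin : ∀ ω, Y ω = 0 ∨ Y ω = 1) (hhbin : ∀ x, h x = 0 ∨ h x = 1)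
    (hYmeas : Measurable Y) (hhmeas : Measurable fun ω => h (X ω))
    (gstar : 𝓦 → ℝ)
    -- g*(w) is the strict conditional majority value of Y given W = w
    (hgstar : ∀ w, μ (W ⁻¹' {w}) ≠ 0 →
      (1 : ENNReal) / 2 < μ[|W ⁻¹' {w}] {ω | Y ω = gstar w})
    -- confidence: P[h(X) = g*(w) | W = w] ≥ P[Y = g*(w) | W = w]
    (hconf : ∀ w, μ (W ⁻¹' {w}) ≠ 0 →
      μ[|W ⁻¹' {w}] {ω | Y ω = gstar w} ≤ μ[|W ⁻¹' {w}] {ω | h (X ω) = gstar w}) :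
    ∀ w, μ (W ⁻¹' {w}) ≠ 0 →
      ((∫ ω, h (X ω) * Y ω ∂(μ[|W ⁻¹' {w}])
          - (∫ ω, h (X ω) ∂(μ[|W ⁻¹' {w}])) * ∫ ω, Y ω ∂(μ[|W ⁻¹' {w}]))
        ≤ variance (fun ω => h (X ω)) (μ[|W ⁻¹' {w}])) ∧
      variance (fun ω => h (X ω)) (μ[|W ⁻¹' {w}]) ≤ variance Y (μ[|W ⁻¹' {w}]) := by
  intro w hw
  set ν := μ[|W ⁻¹' {w}] with hν
  haveI : IsProbabilityMeasure ν := cond_isProbabilityMeasure hw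
  set p : ℝ := (ν {ω | Y ω = 1}).toReal with hp
  set q : ℝ := (ν {ω | h (X ω) = 1}).toReal with hq
  -- basic bounds
  have hp0 : 0 ≤ p := ENNReal.toReal_nonneg
  have hq0 : 0 ≤ q := ENNReal.toReal_nonneg
  have hp1 : p ≤ 1 := by
    rw [hp]; exact ENNReal.toReal_le_of_le_ofReal zero_le_one (by simpa using prob_le_one)
  have hq1 : q ≤ 1 := by
    rw [hq]; exact ENNReal.toReal_le_of_le_ofReal zero_le_one (by simpa using prob_le_one)
  -- integrals
  obtain ⟨hYint, hYI⟩ := bin_facts ν Y hYmeas hYbin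
  obtain ⟨hhint, hhI⟩ := bin_facts ν (fun ω => h (X ω)) hhmeas (fun ω => hhbin (X ω))
  have hHYbin : ∀ ω, h (X ω) * Y ω = 0 ∨ h (X ω) * Y ω = 1 := by
    intro ω
    rcases hhbin (X ω) with h1 | h1 <;> rcases hYbin ω with h2 | h2 <;> simp [h1, h2]
  have hHYmeas : Measurable fun ω => h (X ω) * Y ω := hhmeas.mul hYmeas
  obtain ⟨hHYint, _⟩ := bin_facts ν (fun ω => h (X ω) * Y ω) hHYmeas hHYbin
  have hHY_le_Y : ∫ ω, h (X ω) * Y ω ∂ν ≤ p := by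
    rw [hp, ← hYI]
    refine integral_mono hHYint hYint fun ω => ?_
    rcases hhbin (X ω) with h1 | h1 <;> rcases hYbin ω with h2 | h2 <;> simp [h1, h2]
  have hHY_le_h : ∫ ω, h (X ω) * Y ω ∂ν ≤ q := by
    rw [hq, ← hhI]
    refine integral_mono hHYint hhint fun ω => ?_
    rcases hhbin (X ω) with h1 | h1 <;> rcases hYbin ω with h2 | h2 <;> simp [h1, h2]
  -- variances
  have hVarY : variance Y ν = p - p ^ 2 := bin_variance ν Y hYmeas hYbin
  have hVarh : variance (fun ω => h (X ω)) ν = q - q ^ 2 :=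
    bin_variance ν _ hhmeas (fun ω => hhbin (X ω))
  -- the majority value is 0 or 1
  have hg := hgstar w hw
  have hc := hconf w hw
  have hgcases : gstar w = 0 ∨ gstar w = 1 := by
    by_contra hcon
    push_neg at hcon
    have : {ω | Y ω = gstar w} = ∅ := by
      ext ω
      simp only [Set.mem_setOf_eq, Set.mem_empty_iff_false, iff_false]
      rcases hYbin ω with h1 | h1 <;> rw [h1] <;> intro he <;>
        [exact hcon.1 he.symm; exact hcon.2 he.symm]
    rw [this] at hg
    simp at hg
  have hfin : ∀ s : Set Ω, ν s ≠ ⊤ := fun s => measure_ne_top ν s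
  rcases hgcases with hg0 | hg1
  · -- gstar w = 0 : minority is 1, so p < 1/2 and q ≤ p
    rw [hg0, ← hν] at hg hc
    have hY0 : {ω | Y ω = 0} = {ω | Y ω = 1}ᶜ := by
      ext ω; simp only [Set.mem_setOf_eq, Set.mem_compl_iff]
      rcases hYbin ω with h1 | h1 <;> simp [h1]
    have hh0 : {ω | h (X ω) = 0} = {ω | h (X ω) = 1}ᶜ := by
      ext ω; simp only [Set.mem_setOf_eq, Set.mem_compl_iff]
      rcases hhbin (X ω) with h1 | h1 <;> simp [h1]
    have hcY : ν {ω | Y ω = 1}ᶜ = 1 - ν {ω | Y ω = 1} :=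
      prob_compl_eq_one_sub (hYmeas (measurableSet_singleton 1))
    have hch : ν {ω | h (X ω) = 1}ᶜ = 1 - ν {ω | h (X ω) = 1} :=
      prob_compl_eq_one_sub (hhmeas (measurableSet_singleton 1))
    rw [hY0, hcY] at hg hc
    rw [hh0, hch] at hc
    have hp2 : p < 1 / 2 := by
      have := (ENNReal.toReal_lt_toReal (by norm_num)
        (ne_top_of_le_ne_top ENNReal.one_ne_top tsub_le_self)).2 hg
      rw [ENNReal.toReal_sub_of_le (by simpa using prob_le_one) (by norm_num)] at this
      simp only [ENNReal.toReal_one] at this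
      rw [show ((1 : ENNReal) / 2).toReal = 1 / 2 by simp] at this
      linarith [this]
    have hqp : q ≤ p := by
      have := ENNReal.toReal_mono (ne_top_of_le_ne_top ENNReal.one_ne_top tsub_le_self) hc
      rw [ENNReal.toReal_sub_of_le (by simpa using prob_le_one) (by norm_num),
        ENNReal.toReal_sub_of_le (by simpa using prob_le_one) (by norm_num)] at this
      simp only [ENNReal.toReal_one] at this
      linarith [this]
    rw [hYI, hhI, hVarY, hVarh]
    constructor
    · nlinarith [hHY_le_h]
    · nlinarith
  · -- gstar w = 1 : p > 1/2 and p ≤ q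
    rw [hg1, ← hν] at hg hc
    have hp2 : 1 / 2 < p := by
      have := (ENNReal.toReal_lt_toReal (by norm_num) (hfin _)).2 hg
      rw [show ((1 : ENNReal) / 2).toReal = 1 / 2 by simp] at this
      exact this
    have hpq : p ≤ q := ENNReal.toReal_mono (hfin _) hc
    rw [hYI, hhI, hVarY, hVarh]
    constructor
    · nlinarith [hHY_le_Y]
    · nlinarith
end

section
/- A predictor h : X → [0,1] that is both a pure forward predictor (h(X) ⊥ W) and satisfies the first weak calibration condition E[h(X) | W] = E[Y | W] almost surely must satisfy E[Y | W] = E[Y] almost surely; hence if E[Y | W] is non-constant, no forward predictor is weakly calibrated to Y over W. -/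
open MeasureTheory ProbabilityTheory

/-- A predictor `h : X → [0,1]` that is a pure forward predictor (`h(X) ⊥ W`) and satisfies
the first weak calibration condition `E[h(X) | W] = E[Y | W]` forces `E[Y | W] = E[Y]`
almost surely; hence if `E[Y|W]` is non-constant, no forward predictor is weakly
calibrated to `Y` over `W`. -/
theorem stmt15 {Ω 𝓧 𝓦 : Type*} [MeasurableSpace Ω]
    [MeasurableSpace 𝓦] [Countable 𝓦] [MeasurableSingletonClass 𝓦]
    (μ : Measure Ω) [IsProbabilityMeasure μ]
    (X : Ω → 𝓧) (W : Ω → 𝓦) (Y : Ω → ℝ) (h : 𝓧 → ℝ)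
    (hY01 : ∀ ω, Y ω ∈ Set.Icc (0 : ℝ) 1) (hh01 : ∀ x, h x ∈ Set.Icc (0 : ℝ) 1)
    (hYmeas : Measurable Y) (hhmeas : Measurable fun ω => h (X ω))
    (hWmeas : Measurable W)
    -- pure forward predictor: h(X) is independent of W
    (hind : IndepFun (fun ω => h (X ω)) W μ)
    -- first weak calibration condition: E[h(X) | W] = E[Y | W]
    (hcal : ∀ w, μ (W ⁻¹' {w}) ≠ 0 →
      ∫ ω, h (X ω) ∂(μ[|W ⁻¹' {w}]) = ∫ ω, Y ω ∂(μ[|W ⁻¹' {w}])) :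
    ∀ w, μ (W ⁻¹' {w}) ≠ 0 →
      ∫ ω, Y ω ∂(μ[|W ⁻¹' {w}]) = ∫ ω, Y ω ∂μ := by
  set a : ℝ := ∫ ω, h (X ω) ∂μ with ha
  have hmeas_s : ∀ w : 𝓦, MeasurableSet (W ⁻¹' {w}) := fun w =>
    hWmeas (measurableSet_singleton w)
  have hfin : ∀ w : 𝓦, μ (W ⁻¹' {w}) ≠ ⊤ := fun w => measure_ne_top μ _
  have hint_h : Integrable (fun ω => h (X ω)) μ := by
    refine (integrable_const (1 : ℝ)).mono' hhmeas.aestronglyMeasurable ?_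
    filter_upwards with ω
    have := hh01 (X ω)
    rw [Real.norm_eq_abs, abs_le]
    exact ⟨le_trans (by norm_num) this.1, this.2⟩
  have hint_Y : Integrable Y μ := by
    refine (integrable_const (1 : ℝ)).mono' hYmeas.aestronglyMeasurable ?_
    filter_upwards with ω
    have := hY01 ω
    rw [Real.norm_eq_abs, abs_le]
    exact ⟨le_trans (by norm_num) this.1, this.2⟩
  -- key: conditional expectation of h(X) given W = w equals a
  have hkey : ∀ w : 𝓦, μ (W ⁻¹' {w}) ≠ 0 →
      ∫ ω, h (X ω) ∂(μ[|W ⁻¹' {w}]) = a := by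
    intro w hw
    have hindic : IndepFun (fun ω => h (X ω))
        (fun ω => Set.indicator ({w} : Set 𝓦) (fun _ => (1 : ℝ)) (W ω)) μ := by
      exact hind.comp measurable_id
        (measurable_const.indicator (measurableSet_singleton w))
    have hset : ∫ ω in W ⁻¹' {w}, h (X ω) ∂μ = a * (μ (W ⁻¹' {w})).toReal := by
      have h1 : ∫ ω, h (X ω) * Set.indicator ({w} : Set 𝓦) (fun _ => (1 : ℝ)) (W ω) ∂μ
          = a * ∫ ω, Set.indicator ({w} : Set 𝓦) (fun _ => (1 : ℝ)) (W ω) ∂μ :=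
        hindic.integral_fun_mul_eq_mul_integral hhmeas.aestronglyMeasurable
          ((measurable_const.indicator (measurableSet_singleton w)).comp
            hWmeas).aestronglyMeasurable
      have h2 : ∀ ω, h (X ω) * Set.indicator ({w} : Set 𝓦) (fun _ => (1 : ℝ)) (W ω)
          = Set.indicator (W ⁻¹' {w}) (fun ω => h (X ω)) ω := by
        intro ω
        by_cases hω : W ω ∈ ({w} : Set 𝓦)
        · simp [Set.indicator_of_mem, hω, Set.mem_preimage.mpr hω]
        · simp [Set.indicator_of_notMem, hω, fun hmem => hω hmem]
      have h3 : ∫ ω, Set.indicator ({w} : Set 𝓦) (fun _ => (1 : ℝ)) (W ω) ∂μ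
          = (μ (W ⁻¹' {w})).toReal := by
        have : (fun ω => Set.indicator ({w} : Set 𝓦) (fun _ => (1 : ℝ)) (W ω))
            = Set.indicator (W ⁻¹' {w}) (fun _ => (1 : ℝ)) := by
          ext ω
          by_cases hω : W ω ∈ ({w} : Set 𝓦)
          · simp [Set.indicator_of_mem, hω, Set.mem_preimage.mpr hω]
          · simp [Set.indicator_of_notMem, hω, fun hmem => hω hmem]
        rw [this, integral_indicator_const _ (hmeas_s w)]
        simp
        rfl
      rw [← integral_indicator (hmeas_s w)]
      calc ∫ ω, Set.indicator (W ⁻¹' {w}) (fun ω => h (X ω)) ω ∂μ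
          = ∫ ω, h (X ω) * Set.indicator ({w} : Set 𝓦) (fun _ => (1 : ℝ)) (W ω) ∂μ := by
            exact integral_congr_ae (Filter.Eventually.of_forall fun ω => (h2 ω).symm)
        _ = a * (μ (W ⁻¹' {w})).toReal := by rw [h1, h3]
    rw [ProbabilityTheory.cond, integral_smul_measure, hset]
    rw [ENNReal.toReal_inv]
    have hne : (μ (W ⁻¹' {w})).toReal ≠ 0 := by
      simp [ENNReal.toReal_eq_zero_iff, hw, hfin w]
    rw [smul_eq_mul]; field_simp
  -- hence E[Y | W = w] = a for all relevant w
  have hYcond : ∀ w : 𝓦, μ (W ⁻¹' {w}) ≠ 0 →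
      ∫ ω, Y ω ∂(μ[|W ⁻¹' {w}]) = a := fun w hw => (hcal w hw).symm.trans (hkey w hw)
  -- now show ∫ Y dμ = a
  have hsetY : ∀ w : 𝓦, ∫ ω in W ⁻¹' {w}, Y ω ∂μ = (μ (W ⁻¹' {w})).toReal * a := by
    intro w
    by_cases hw : μ (W ⁻¹' {w}) = 0
    · rw [show μ.restrict (W ⁻¹' {w}) = 0 from Measure.restrict_eq_zero.mpr hw]
      simp [hw]
    · have := hYcond w hw
      rw [ProbabilityTheory.cond, integral_smul_measure, ENNReal.toReal_inv] at this
      have hne : (μ (W ⁻¹' {w})).toReal ≠ 0 := by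
        simp [ENNReal.toReal_eq_zero_iff, hw, hfin w]
      rw [smul_eq_mul] at this; field_simp at this
      rw [this]
  have hdecomp : ∫ ω, Y ω ∂μ = ∑' w : 𝓦, ∫ ω in W ⁻¹' {w}, Y ω ∂μ := by
    have hU : (⋃ w : 𝓦, W ⁻¹' {w}) = Set.univ := by
      ext ω; simp
    have := integral_iUnion (X := Ω) (μ := μ) (f := Y) hmeas_s
      (fun i j hij => Set.disjoint_left.mpr (by
        intro ω hi hj
        simp only [Set.mem_preimage, Set.mem_singleton_iff] at hi hj
        exact hij (hi.symm.trans hj)))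
      (by rw [hU]; exact hint_Y.integrableOn)
    rw [hU] at this
    rw [← setIntegral_univ, this]
  have hsum1 : ∑' w : 𝓦, (μ (W ⁻¹' {w})).toReal = 1 := by
    have hU : (⋃ w : 𝓦, W ⁻¹' {w}) = Set.univ := by ext ω; simp
    have hdisj : Pairwise (Function.onFun Disjoint fun w : 𝓦 => W ⁻¹' {w}) := by
      intro i j hij
      exact Set.disjoint_left.mpr (by
        intro ω hi hj
        simp only [Set.mem_preimage, Set.mem_singleton_iff] at hi hj
        exact hij (hi.symm.trans hj))
    have := measure_iUnion (μ := μ) hdisj hmeas_s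
    rw [hU, measure_univ] at this
    rw [← ENNReal.tsum_toReal_eq hfin, ← this]
    simp
  have hEY : ∫ ω, Y ω ∂μ = a := by
    rw [hdecomp]
    calc ∑' w : 𝓦, ∫ ω in W ⁻¹' {w}, Y ω ∂μ
        = ∑' w : 𝓦, (μ (W ⁻¹' {w})).toReal * a := by
          exact tsum_congr hsetY
      _ = (∑' w : 𝓦, (μ (W ⁻¹' {w})).toReal) * a := by
          rw [tsum_mul_right]
      _ = a := by rw [hsum1, one_mul]
  intro w hw
  rw [hYcond w hw, hEY]
end
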